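/- arXiv:2512.14438 — 2 statements merged into one kernel-verified Lean document; each statement's English description precedes it below -/
import Mathlib

section
/- For all real x, the Methfessel auxiliary entropy function equals the composed entropy: ∫_x^∞ y·δ̃_FD(y) dy = s_FD(f_FD(x)), where s_FD(f) = -(f log f + (1-f) log(1-f)). -/
noncomputable def fFD (x : ℝ) : ℝ := (Real.exp x + 1)⁻¹

noncomputable def deltaFD (x : ℝ) : ℝ := ((Real.exp x + 1) * (Real.exp (-x) + 1))⁻¹

noncomputable def sFD (f : ℝ) : ℝ := -(f * Real.log f + (1 - f) * Real.log (1 - f))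

open Real MeasureTheory Set

lemma exp_add_one_pos (y : ℝ) : 0 < Real.exp y + 1 := by positivity

lemma deltaFD_eq (y : ℝ) : deltaFD y = Real.exp y / (Real.exp y + 1) ^ 2 := by
  have h1 : Real.exp y ≠ 0 := (Real.exp_pos y).ne'
  have h2 : Real.exp y + 1 ≠ 0 := (exp_add_one_pos y).ne'
  unfold deltaFD
  rw [Real.exp_neg]
  field_simp
  ring

lemma fFD_pos (y : ℝ) : 0 < fFD y := by
  unfold fFD; positivity

lemma one_sub_fFD (y : ℝ) : 1 - fFD y = Real.exp y / (Real.exp y + 1) := by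
  have h2 : Real.exp y + 1 ≠ 0 := (exp_add_one_pos y).ne'
  unfold fFD
  field_simp
  ring

lemma one_sub_fFD_pos (y : ℝ) : 0 < 1 - fFD y := by
  rw [one_sub_fFD]; positivity

lemma hasDerivAt_fFD (y : ℝ) : HasDerivAt fFD (-(deltaFD y)) y := by
  have h2 : Real.exp y + 1 ≠ 0 := (exp_add_one_pos y).ne'
  have h : HasDerivAt (fun t => Real.exp t + 1) (Real.exp y) y :=
    (Real.hasDerivAt_exp y).add_const 1
  have := h.inv h2
  refine this.congr_deriv ?_
  rw [deltaFD_eq]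
  field_simp

/-- The antiderivative. -/
noncomputable def GFD (y : ℝ) : ℝ :=
  fFD y * Real.log (fFD y) + (1 - fFD y) * Real.log (1 - fFD y)

lemma hasDerivAt_GFD (y : ℝ) : HasDerivAt GFD (y * deltaFD y) y := by
  have hf := hasDerivAt_fFD y
  have hfne : fFD y ≠ 0 := (fFD_pos y).ne'
  have h1fne : 1 - fFD y ≠ 0 := (one_sub_fFD_pos y).ne'
  have h2 : Real.exp y + 1 ≠ 0 := (exp_add_one_pos y).ne'
  have hg : HasDerivAt (fun t => 1 - fFD t) (-(-(deltaFD y))) y := (hasDerivAt_fFD y).const_sub 1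
  have hA : HasDerivAt (fun t => fFD t * Real.log (fFD t))
      (-(deltaFD y) * Real.log (fFD y) + fFD y * (-(deltaFD y) / fFD y)) y :=
    hf.mul (hf.log hfne)
  have hB : HasDerivAt (fun t => (1 - fFD t) * Real.log (1 - fFD t))
      (-(-(deltaFD y)) * Real.log (1 - fFD y) + (1 - fFD y) * (-(-(deltaFD y)) / (1 - fFD y))) y :=
    hg.mul (hg.log h1fne)
  have := hA.add hB
  refine this.congr_deriv ?_
  have hlogf : Real.log (fFD y) = -Real.log (Real.exp y + 1) := by
    unfold fFD; rw [Real.log_inv]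
  have hlog1f : Real.log (1 - fFD y) = y - Real.log (Real.exp y + 1) := by
    rw [one_sub_fFD, Real.log_div (Real.exp_pos y).ne' h2, Real.log_exp]
  rw [hlogf, hlog1f]
  field_simp
  ring

lemma continuous_GFD_aux : Continuous fun t : ℝ => t * Real.log t + (1 - t) * Real.log (1 - t) := by
  have h1 := Real.continuous_mul_log
  have h2 : Continuous fun t : ℝ => (1 - t) * Real.log (1 - t) :=
    h1.comp (continuous_const.sub continuous_id)
  exact h1.add h2

lemma tendsto_fFD_atTop : Filter.Tendsto fFD Filter.atTop (nhds 0) := by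
  unfold fFD
  exact Filter.Tendsto.inv_tendsto_atTop (Filter.tendsto_atTop_add_const_right _ 1
    Real.tendsto_exp_atTop)

lemma tendsto_GFD_atTop : Filter.Tendsto GFD Filter.atTop (nhds 0) := by
  have h := (continuous_GFD_aux.tendsto 0).comp tendsto_fFD_atTop
  unfold GFD
  simpa [GFD, Function.comp_def] using h

lemma continuous_integrand : Continuous fun y : ℝ => y * deltaFD y := by
  apply continuous_id.mul
  apply Continuous.inv₀
  · fun_prop
  · intro y
    have h1 := exp_add_one_pos y
    have h2 := exp_add_one_pos (-y)
    positivity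

lemma integrableOn_integrand (x : ℝ) :
    IntegrableOn (fun y : ℝ => y * deltaFD y) (Ioi x) := by
  have hsub : Ioi x ⊆ Icc x 0 ∪ Ioi 0 := by
    intro y hy
    rcases le_or_gt y 0 with h | h
    · exact Or.inl ⟨le_of_lt hy, h⟩
    · exact Or.inr h
  apply IntegrableOn.mono_set _ hsub
  apply IntegrableOn.union
  · exact continuous_integrand.continuousOn.integrableOn_Icc
  · -- dominate by y * exp (-y) on Ioi 0
    have hint : IntegrableOn (fun y : ℝ => y * Real.exp (-y)) (Ioi 0) := by
      have := integrableOn_rpow_mul_exp_neg_rpow (p := 1) (s := 1) (by norm_num) zero_lt_one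
      apply this.congr_fun _ measurableSet_Ioi
      intro y hy
      simp [Real.rpow_one]
    apply Integrable.mono' hint (continuous_integrand.aestronglyMeasurable.restrict)
    filter_upwards [ae_restrict_mem measurableSet_Ioi] with y hy
    have hy0 : (0 : ℝ) < y := hy
    have hδ : deltaFD y ≤ Real.exp (-y) := by
      rw [deltaFD_eq, Real.exp_neg]
      rw [div_le_iff₀ (by positivity)]
      rw [inv_mul_eq_div, le_div_iff₀ (Real.exp_pos y)]
      have h : Real.exp y * Real.exp y ≤ (Real.exp y + 1) ^ 2 := by nlinarith [Real.exp_pos y]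
      nlinarith [Real.exp_pos y]
    have hδ0 : 0 ≤ deltaFD y := by
      rw [deltaFD_eq]; positivity
    rw [Real.norm_eq_abs, abs_mul, abs_of_pos hy0, abs_of_nonneg hδ0]
    exact mul_le_mul_of_nonneg_left hδ hy0.le

theorem sTildeFD_eq_sFD_comp_fFD (x : ℝ) :
    (∫ y in Set.Ioi x, y * deltaFD y) = sFD (fFD x) := by
  have h := integral_Ioi_of_hasDerivAt_of_tendsto' (f := GFD)
    (f' := fun y => y * deltaFD y) (fun y _ => hasDerivAt_GFD y)
    (integrableOn_integrand x) tendsto_GFD_atTop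
  rw [h]
  unfold GFD sFD
  ring
end

section
/- Sommerfeld expansion to second order: let h : ℝ → ℝ be C² with h and h' bounded and integrable near -∞ (so that all integrals converge), and let μ ∈ ℝ. Then as T → 0⁺, ∫_{-∞}^{∞} h(ε)·f_FD((ε-μ)/T) dε = ∫_{-∞}^{μ} h(ε) dε + (π²/6)·h'(μ)·T² + o(T²). -/
open MeasureTheory Filter Asymptotics

section SommerfeldAux

open Real Set

lemma fFD_nonneg (x : ℝ) : 0 ≤ fFD x := by
  unfold fFD; positivity

lemma fFD_le_one (x : ℝ) : fFD x ≤ 1 := by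
  rw [fFD]
  have h := Real.exp_pos x
  rw [inv_le_one_iff₀]
  right; linarith

lemma fFD_le_exp (x : ℝ) : fFD x ≤ Real.exp (-x) := by
  rw [fFD, Real.exp_neg]
  have h := Real.exp_pos x
  exact inv_anti₀ h (by linarith)

lemma fFD_neg (x : ℝ) : fFD (-x) = 1 - fFD x := by
  have h1 := Real.exp_pos x
  have h2 := Real.exp_pos (-x)
  rw [fFD, fFD, Real.exp_neg]
  have h3 : Real.exp x + 1 ≠ 0 := by positivity
  have h4 : (Real.exp x)⁻¹ + 1 ≠ 0 := by positivity
  field_simp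
  ring

lemma continuous_fFD : Continuous fFD := by
  unfold fFD
  exact Continuous.inv₀ (by continuity) (fun x => by positivity)

lemma integrableOn_mul_exp {a : ℝ} (ha : 0 < a) :
    IntegrableOn (fun t : ℝ => t * Real.exp (-(a * t))) (Ioi 0) := by
  have h1 : IntegrableOn (fun x : ℝ => Real.exp (-x) * x ^ ((2:ℝ) - 1)) (Ioi 0) :=
    Real.GammaIntegral_convergent (by norm_num)
  have h2 : IntegrableOn (fun x : ℝ => x * Real.exp (-x)) (Ioi 0) := by
    refine h1.congr_fun (fun x hx => ?_) measurableSet_Ioi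
    norm_num [Real.rpow_one, mul_comm]
  have h3 : IntegrableOn (fun x : ℝ => (a * x) * Real.exp (-(a * x))) (Ioi 0) := by
    have h4 := (integrableOn_Ioi_comp_mul_left_iff
      (fun x : ℝ => x * Real.exp (-x)) 0 ha).mpr (by simpa using h2)
    simpa using h4
  have h5 : IntegrableOn (fun x : ℝ => a⁻¹ * ((a * x) * Real.exp (-(a * x)))) (Ioi 0) :=
    h3.const_mul a⁻¹
  refine h5.congr_fun (fun x hx => ?_) measurableSet_Ioi
  field_simp

lemma integral_mul_exp {a : ℝ} (ha : 0 < a) :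
    ∫ t in Ioi (0:ℝ), t * Real.exp (-(a * t)) = 1 / (a:ℝ) ^ 2 := by
  have h := Real.integral_rpow_mul_exp_neg_mul_Ioi (by norm_num : (0:ℝ) < 2) ha
  have e1 : EqOn (fun t : ℝ => t ^ ((2:ℝ) - 1) * Real.exp (-(a * t)))
      (fun t : ℝ => t * Real.exp (-(a * t))) (Ioi 0) := by
    intro t ht
    norm_num [Real.rpow_one]
  rw [← setIntegral_congr_fun measurableSet_Ioi e1, h, Real.Gamma_two,
    show ((2:ℝ)) = ((2:ℕ):ℝ) by norm_num, Real.rpow_natCast]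
  field_simp

lemma integrableOn_fFD_Ioi : IntegrableOn fFD (Ioi 0) := by
  refine Integrable.mono' (exp_neg_integrableOn_Ioi 0 one_pos) ?_ ?_
  · exact continuous_fFD.aestronglyMeasurable.restrict
  · refine Filter.Eventually.of_forall (fun x => ?_)
    rw [Real.norm_eq_abs, abs_of_nonneg (fFD_nonneg x)]
    simpa using fFD_le_exp x

lemma integrableOn_id_mul_fFD_Ioi : IntegrableOn (fun x => x * fFD x) (Ioi 0) := by
  refine Integrable.mono' (integrableOn_mul_exp one_pos) ?_ ?_
  · exact (continuous_id.mul continuous_fFD).aestronglyMeasurable.restrict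
  · rw [ae_restrict_iff' measurableSet_Ioi]
    refine Filter.Eventually.of_forall (fun x hx => ?_)
    have hx0 : (0:ℝ) < x := hx
    rw [Real.norm_eq_abs, abs_of_nonneg (mul_nonneg hx0.le (fFD_nonneg x))]
    have h2 : x * fFD x ≤ x * Real.exp (-x) := by
      nlinarith [fFD_le_exp x, fFD_nonneg x]
    simpa using h2

set_option maxHeartbeats 1000000 in
lemma hasSum_inv_sq : HasSum (fun n : ℕ => 1 / ((n:ℝ) + 1) ^ 2) (π ^ 2 / 6) := by
  have h0 := hasSum_zeta_two
  have h1 := (hasSum_nat_add_iff' (f := fun n : ℕ => (1:ℝ) / (n:ℝ) ^ 2) 1).mpr h0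
  have h2 : (∑ i ∈ Finset.range 1, (1:ℝ) / (i:ℝ) ^ 2) = 0 := by
    simp
  rw [h2, sub_zero] at h1
  have h3 : (fun n : ℕ => (1:ℝ) / ((n + 1 : ℕ):ℝ) ^ 2) = fun n : ℕ => 1 / ((n:ℝ) + 1) ^ 2 := by
    funext n; push_cast; ring
  rwa [h3] at h1

set_option maxHeartbeats 1000000 in
lemma hasSum_alt : HasSum (fun n : ℕ => (-1:ℝ) ^ n / ((n:ℝ) + 1) ^ 2) (π ^ 2 / 12) := by
  have hb := hasSum_inv_sq
  have hodd : HasSum (fun k : ℕ => 1 / (((2*k+1:ℕ):ℝ) + 1) ^ 2) (π ^ 2 / 24) := by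
    have hmul := hb.mul_left (1/4)
    have hfun : (fun k : ℕ => 1/4 * (1 / ((k:ℝ) + 1) ^ 2))
        = fun k : ℕ => 1 / (((2*k+1:ℕ):ℝ) + 1) ^ 2 := by
      funext k
      push_cast
      have hk : ((k:ℝ) + 1) ≠ 0 := by positivity
      have hk2 : (2*(k:ℝ) + 1 + 1) ≠ 0 := by positivity
      field_simp
      ring
    have hval : (1:ℝ)/4 * (π ^ 2 / 6) = π ^ 2 / 24 := by ring
    rw [hfun, hval] at hmul
    exact hmul
  have hsum_even : Summable (fun k : ℕ => (1:ℝ) / (((2*k:ℕ):ℝ) + 1) ^ 2) := by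
    have hinj : Function.Injective (fun k : ℕ => 2 * k) := fun a b hab => by
      simp only [] at hab; omega
    exact hb.summable.comp_injective hinj
  obtain ⟨a, ha⟩ := hsum_even
  have htot : HasSum (fun n : ℕ => 1 / ((n:ℝ) + 1) ^ 2) (a + π ^ 2 / 24) :=
    HasSum.even_add_odd (f := fun n : ℕ => 1 / ((n:ℝ) + 1) ^ 2) ha hodd
  have haval : a = π ^ 2 / 8 := by
    have := hb.unique htot
    linarith
  rw [haval] at ha
  have heven' : HasSum (fun k : ℕ => (-1:ℝ) ^ (2*k) / (((2*k:ℕ):ℝ) + 1) ^ 2) (π ^ 2 / 8) := by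
    have hfun : (fun k : ℕ => (1:ℝ) / (((2*k:ℕ):ℝ) + 1) ^ 2)
        = fun k : ℕ => (-1:ℝ) ^ (2*k) / (((2*k:ℕ):ℝ) + 1) ^ 2 := by
      funext k
      rw [pow_mul]
      norm_num
    rw [← hfun]
    exact ha
  have hodd' : HasSum (fun k : ℕ => (-1:ℝ) ^ (2*k+1) / (((2*k+1:ℕ):ℝ) + 1) ^ 2)
      (-(π ^ 2 / 24)) := by
    have hneg := hodd.neg
    have hfun : (fun k : ℕ => -((1:ℝ) / (((2*k+1:ℕ):ℝ) + 1) ^ 2))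
        = fun k : ℕ => (-1:ℝ) ^ (2*k+1) / (((2*k+1:ℕ):ℝ) + 1) ^ 2 := by
      funext k
      have hs : (-1:ℝ) ^ (2*k+1) = -1 := by
        rw [pow_succ, pow_mul]
        norm_num
      rw [hs, neg_div]
    rw [← hfun]
    exact hneg
  have hfin := HasSum.even_add_odd (f := fun n : ℕ => (-1:ℝ) ^ n / ((n:ℝ) + 1) ^ 2) heven' hodd'
  have hval : π ^ 2 / 8 + -(π ^ 2 / 24) = π ^ 2 / 12 := by ring
  rwa [hval] at hfin

lemma integral_id_mul_fFD : ∫ x in Ioi (0:ℝ), x * fFD x = π ^ 2 / 12 := by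
  set F : ℕ → ℝ → ℝ := fun n t => (-1 : ℝ) ^ n * (t * Real.exp (-(((n:ℝ) + 1) * t))) with hF
  have hpos : ∀ n : ℕ, (0:ℝ) < (n:ℝ) + 1 := fun n => by positivity
  have hFint : ∀ n, Integrable (F n) (volume.restrict (Ioi 0)) := fun n =>
    (integrableOn_mul_exp (hpos n)).const_mul _
  have hnormint : ∀ n : ℕ, ∫ t in Ioi (0:ℝ), ‖F n t‖ = 1 / ((n:ℝ) + 1) ^ 2 := by
    intro n
    rw [← integral_mul_exp (hpos n)]
    refine setIntegral_congr_fun measurableSet_Ioi (fun t ht => ?_)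
    have ht0 : (0:ℝ) < t := ht
    simp only [hF, norm_mul, norm_pow, norm_neg, norm_one, one_pow, one_mul, Real.norm_eq_abs]
    rw [abs_of_pos ht0, abs_of_pos (Real.exp_pos _)]
  have hsum : Summable fun n => ∫ t in Ioi (0:ℝ), ‖F n t‖ :=
    Summable.congr hasSum_inv_sq.summable (fun n => (hnormint n).symm)
  have key := hasSum_integral_of_summable_integral_norm hFint hsum
  have hts : ∀ t ∈ Ioi (0:ℝ), (∑' n, F n t) = t * fFD t := by
    intro t ht
    have ht0 : (0:ℝ) < t := ht
    have hlt : |(-Real.exp (-t))| < 1 := by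
      rw [abs_neg, abs_of_pos (Real.exp_pos _)]
      exact Real.exp_lt_one_iff.mpr (by linarith)
    have hgeo := (hasSum_geometric_of_abs_lt_one hlt).mul_left (t * Real.exp (-t))
    have heq : (fun n : ℕ => (t * Real.exp (-t)) * (-Real.exp (-t)) ^ n) = fun n => F n t := by
      funext n
      have e1 : Real.exp (-t) ^ n = Real.exp ((n:ℝ) * (-t)) := (Real.exp_nat_mul (-t) n).symm
      have e2 : Real.exp (-t) * Real.exp ((n:ℝ) * (-t)) = Real.exp (-(((n:ℝ)+1) * t)) := by
        rw [← Real.exp_add]; ring_nf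
      simp only [hF]
      rw [neg_pow, e1, ← e2]
      ring
    rw [heq] at hgeo
    rw [hgeo.tsum_eq, fFD]
    have hx := Real.exp_pos t
    have h5 : Real.exp t + 1 ≠ 0 := by positivity
    rw [Real.exp_neg]
    have h6 : 1 - -(Real.exp t)⁻¹ ≠ 0 :=
      ne_of_gt (by have : (0:ℝ) < (Real.exp t)⁻¹ := inv_pos.mpr hx; linarith)
    field_simp
    rw [sub_neg_eq_add, div_self h5]
  have hcongr : ∫ t in Ioi (0:ℝ), (∑' n, F n t) = ∫ t in Ioi (0:ℝ), t * fFD t :=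
    setIntegral_congr_fun measurableSet_Ioi hts
  rw [hcongr] at key
  have hvals : (fun n : ℕ => ∫ t in Ioi (0:ℝ), F n t)
      = fun n : ℕ => (-1:ℝ)^n / ((n:ℝ)+1)^2 := by
    funext n
    simp only [hF]
    rw [integral_const_mul, integral_mul_exp (hpos n)]
    ring
  rw [hvals] at key
  exact key.unique hasSum_alt

lemma integral_comp_add_mul_Ioi (g : ℝ → ℝ) {T : ℝ} (hT : 0 < T) (c : ℝ) :
    ∫ x in Ioi (0:ℝ), g (c + T * x) = T⁻¹ * ∫ ε in Ioi c, g ε := by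
  have h1 := integral_comp_mul_left_Ioi (fun y => g (c + y)) 0 hT
  simp only [mul_zero, smul_eq_mul] at h1
  rw [h1]
  congr 1
  have hmp := measurePreserving_add_left (volume : Measure ℝ) c
  have hemb : MeasurableEmbedding (fun y : ℝ => c + y) :=
    (MeasurableEquiv.addLeft c).measurableEmbedding
  have h2 := hmp.setIntegral_preimage_emb hemb g (Ioi c)
  have hset : (fun y : ℝ => c + y) ⁻¹' (Ioi c) = Ioi 0 := by
    ext y; simp
  rw [hset] at h2
  exact h2

lemma integral_comp_sub_mul_Ioi (g : ℝ → ℝ) {T : ℝ} (hT : 0 < T) (c : ℝ) :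
    ∫ x in Ioi (0:ℝ), g (c - T * x) = T⁻¹ * ∫ ε in Iio c, g ε := by
  have h1 := integral_comp_mul_left_Ioi (fun y => g (c - y)) 0 hT
  simp only [mul_zero, smul_eq_mul] at h1
  rw [h1]
  congr 1
  have hmp : MeasurePreserving (fun y : ℝ => c - y) volume volume := by
    have := (measurePreserving_add_left (volume : Measure ℝ) c).comp
      (Measure.measurePreserving_neg (volume : Measure ℝ))
    simpa [Function.comp_def, sub_eq_add_neg] using this
  have hemb : MeasurableEmbedding (fun y : ℝ => c - y) :=
    (MeasurableEquiv.subLeft c).measurableEmbedding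
  have h2 := hmp.setIntegral_preimage_emb hemb g (Iio c)
  have hset : (fun y : ℝ => c - y) ⁻¹' (Iio c) = Ioi 0 := by
    ext y
    simp only [mem_preimage, mem_Iio, mem_Ioi]
    constructor <;> intro hy <;> linarith
  rw [hset] at h2
  exact h2

end SommerfeldAux

set_option maxHeartbeats 4000000 in
theorem sommerfeld_expansion_second_order
    (h : ℝ → ℝ) (μ : ℝ)
    (hC2 : ContDiff ℝ 2 h)
    (hb : ∃ C : ℝ, ∀ x, |h x| ≤ C)
    (hb' : ∃ C : ℝ, ∀ x, |deriv h x| ≤ C)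
    (hint : IntegrableOn h (Set.Iic μ))
    (hint' : IntegrableOn (deriv h) (Set.Iic μ)) :
    (fun T : ℝ =>
        (∫ ε : ℝ, h ε * fFD ((ε - μ) / T)) -
          ((∫ ε in Set.Iic μ, h ε) + Real.pi ^ 2 / 6 * deriv h μ * T ^ 2))
      =o[nhdsWithin 0 (Set.Ioi 0)] fun T : ℝ => T ^ 2 := by
  obtain ⟨C, hC⟩ := hb
  obtain ⟨C', hC'⟩ := hb'
  have hcont : Continuous h := hC2.continuous
  have hd : Differentiable ℝ h := hC2.differentiable (by norm_num)
  have hC0 : 0 ≤ C := le_trans (abs_nonneg _) (hC 0)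
  have hC'0 : 0 ≤ C' := le_trans (abs_nonneg _) (hC' 0)
  set d : ℝ := deriv h μ with hd_def
  have hdC : |d| ≤ C' := hC' μ
  have hlip : ∀ a b : ℝ, |h a - h b| ≤ C' * |a - b| := by
    intro a b
    have := Convex.norm_image_sub_le_of_norm_deriv_le (f := h) (s := Set.univ)
      (fun x _ => hd x) (fun x _ => hC' x) convex_univ (Set.mem_univ b) (Set.mem_univ a)
    simpa [Real.norm_eq_abs] using this
  set Φ : ℝ → ℝ → ℝ := fun T x => ((h (μ + T * x) - h (μ - T * x)) / T - 2 * d * x) * fFD x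
    with hΦdef
  have hcΦ : ∀ T : ℝ, Continuous (Φ T) := by
    intro T
    apply Continuous.mul _ continuous_fFD
    apply Continuous.sub _ (by continuity)
    apply Continuous.div_const
    exact (hcont.comp (by continuity)).sub (hcont.comp (by continuity))
  -- reduce to a tendsto statement
  rw [Asymptotics.isLittleO_iff_tendsto' (by
    filter_upwards [self_mem_nhdsWithin] with T hT h0
    exact absurd h0 (pow_ne_zero 2 (ne_of_gt hT)))]
  -- dominated convergence for the Φ integrals
  have hTend : Filter.Tendsto (fun T => ∫ x in Set.Ioi (0:ℝ), Φ T x)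
      (nhdsWithin 0 (Set.Ioi 0)) (nhds 0) := by
    have key : Filter.Tendsto (fun T => ∫ x in Set.Ioi (0:ℝ), Φ T x)
        (nhdsWithin 0 (Set.Ioi 0)) (nhds (∫ x in Set.Ioi (0:ℝ), (0:ℝ))) := by
      refine tendsto_integral_filter_of_dominated_convergence
        (fun x => 4 * C' * (x * fFD x)) ?_ ?_ ?_ ?_
      · exact Filter.Eventually.of_forall (fun T => (hcΦ T).aestronglyMeasurable.restrict)
      · filter_upwards [self_mem_nhdsWithin] with T hT
        rw [ae_restrict_iff' measurableSet_Ioi]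
        refine Filter.Eventually.of_forall (fun x hx => ?_)
        have hx0 : (0:ℝ) < x := hx
        have hT0 : (0:ℝ) < T := hT
        have hf0 := fFD_nonneg x
        have h1 : |h (μ + T*x) - h (μ - T*x)| ≤ C' * (2 * (T * x)) := by
          have hl := hlip (μ + T*x) (μ - T*x)
          have he : |(μ + T*x) - (μ - T*x)| = 2*(T*x) := by
            rw [show (μ + T*x) - (μ - T*x) = 2*(T*x) by ring]
            exact abs_of_nonneg (by positivity)
          rw [he] at hl
          linarith
        have h3 : |(h (μ + T * x) - h (μ - T * x)) / T| ≤ 2 * C' * x := by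
          rw [abs_div, abs_of_pos hT0, div_le_iff₀ hT0]
          calc |h (μ + T*x) - h (μ - T*x)| ≤ C' * (2*(T*x)) := h1
            _ = 2*C'*x*T := by ring
        have h4 : |2*d*x| ≤ 2*C'*x := by
          rw [abs_mul, abs_mul, abs_of_pos hx0]
          have : |(2:ℝ)| = 2 := by norm_num
          rw [this]
          nlinarith [abs_nonneg d]
        have h2 : |((h (μ + T * x) - h (μ - T * x)) / T - 2 * d * x)| ≤ 4 * C' * x := by
          calc |((h (μ + T * x) - h (μ - T * x)) / T - 2 * d * x)|
              ≤ |(h (μ + T * x) - h (μ - T * x)) / T| + |2*d*x| := by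
                rw [sub_eq_add_neg]
                refine (abs_add_le _ _).trans ?_
                rw [abs_neg]
            _ ≤ 2*C'*x + 2*C'*x := add_le_add h3 h4
            _ = 4*C'*x := by ring
        rw [Real.norm_eq_abs]
        simp only [hΦdef]
        rw [abs_mul, abs_of_nonneg hf0]
        calc |((h (μ + T * x) - h (μ - T * x)) / T - 2 * d * x)| * fFD x
            ≤ (4*C'*x) * fFD x := mul_le_mul_of_nonneg_right h2 hf0
          _ = 4 * C' * (x * fFD x) := by ring
      · exact integrableOn_id_mul_fFD_Ioi.const_mul _
      · rw [ae_restrict_iff' measurableSet_Ioi]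
        refine Filter.Eventually.of_forall (fun x hx => ?_)
        have hx0 : (0:ℝ) < x := hx
        have hder := hasDerivAt_iff_tendsto_slope.mp (hd μ).hasDerivAt
        have t1 : Filter.Tendsto (fun T : ℝ => μ + T * x) (nhdsWithin 0 (Set.Ioi 0))
            (nhdsWithin μ {μ}ᶜ) := by
          rw [tendsto_nhdsWithin_iff]
          constructor
          · have hc : Filter.Tendsto (fun T : ℝ => μ + T * x) (nhds 0) (nhds (μ + 0 * x)) :=
              tendsto_const_nhds.add (tendsto_id.mul_const x)
            simpa using hc.mono_left nhdsWithin_le_nhds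
          · filter_upwards [self_mem_nhdsWithin] with T hT
            have : (0:ℝ) < T * x := mul_pos hT hx0
            simp only [Set.mem_compl_iff, Set.mem_singleton_iff]
            intro hcon
            nlinarith
        have t2 : Filter.Tendsto (fun T : ℝ => μ - T * x) (nhdsWithin 0 (Set.Ioi 0))
            (nhdsWithin μ {μ}ᶜ) := by
          rw [tendsto_nhdsWithin_iff]
          constructor
          · have hc : Filter.Tendsto (fun T : ℝ => μ - T * x) (nhds 0) (nhds (μ - 0 * x)) :=
              tendsto_const_nhds.sub (tendsto_id.mul_const x)
            simpa using hc.mono_left nhdsWithin_le_nhds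
          · filter_upwards [self_mem_nhdsWithin] with T hT
            have : (0:ℝ) < T * x := mul_pos hT hx0
            simp only [Set.mem_compl_iff, Set.mem_singleton_iff]
            intro hcon
            nlinarith
        have s1 := hder.comp t1
        have s2 := hder.comp t2
        have comb : Filter.Tendsto
            (fun T : ℝ => (x * (slope h μ (μ + T*x) + slope h μ (μ - T*x)) - 2*d*x) * fFD x)
            (nhdsWithin 0 (Set.Ioi 0)) (nhds ((x*(d+d) - 2*d*x) * fFD x)) :=
          ((tendsto_const_nhds.mul (s1.add s2)).sub tendsto_const_nhds).mul tendsto_const_nhds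
        have hval : (x*(d+d) - 2*d*x) * fFD x = 0 := by ring
        rw [hval] at comb
        refine Filter.Tendsto.congr' ?_ comb
        filter_upwards [self_mem_nhdsWithin] with T hT
        have hT0 : (0:ℝ) < T := hT
        simp only [hΦdef, slope_def_field]
        rw [show μ + T*x - μ = T*x by ring, show μ - T*x - μ = -(T*x) by ring]
        have hTx : T * x ≠ 0 := (mul_pos hT0 hx0).ne'
        field_simp
        ring
    simpa using key
  -- the eventual equality
  have hX := integral_id_mul_fFD
  have hmain : (fun T : ℝ => ((∫ ε : ℝ, h ε * fFD ((ε - μ) / T)) -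
          ((∫ ε in Set.Iic μ, h ε) + Real.pi ^ 2 / 6 * d * T ^ 2)) / T ^ 2)
      =ᶠ[nhdsWithin 0 (Set.Ioi 0)] (fun T => ∫ x in Set.Ioi (0:ℝ), Φ T x) := by
    filter_upwards [self_mem_nhdsWithin] with T hT
    have hT0 : (0:ℝ) < T := hT
    have hTne : T ≠ 0 := ne_of_gt hT0
    -- integrability on Ioi 0
    have intA : IntegrableOn (fun x => h (μ + T * x) * fFD x) (Set.Ioi 0) := by
      refine Integrable.mono' (integrableOn_fFD_Ioi.const_mul C)
        ((Continuous.mul (hcont.comp (by continuity)) continuous_fFD).aestronglyMeasurable.restrict)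
        (Filter.Eventually.of_forall (fun x => ?_))
      rw [Real.norm_eq_abs, abs_mul, abs_of_nonneg (fFD_nonneg x)]
      exact mul_le_mul_of_nonneg_right (hC _) (fFD_nonneg x)
    have intB : IntegrableOn (fun x => h (μ - T * x) * fFD x) (Set.Ioi 0) := by
      refine Integrable.mono' (integrableOn_fFD_Ioi.const_mul C)
        ((Continuous.mul (hcont.comp (by continuity)) continuous_fFD).aestronglyMeasurable.restrict)
        (Filter.Eventually.of_forall (fun x => ?_))
      rw [Real.norm_eq_abs, abs_mul, abs_of_nonneg (fFD_nonneg x)]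
      exact mul_le_mul_of_nonneg_right (hC _) (fFD_nonneg x)
    have intD : IntegrableOn (fun x => (h (μ + T * x) - h (μ - T * x)) * fFD x) (Set.Ioi 0) := by
      have hsub : IntegrableOn
          (fun x => h (μ + T * x) * fFD x - h (μ - T * x) * fFD x) (Set.Ioi 0) := intA.sub intB
      refine hsub.congr_fun (fun x hx => ?_) measurableSet_Ioi
      ring
    -- global integrability of the Fermi-Dirac weighted integrand
    have hfint1 : IntegrableOn (fun ε => h ε * fFD ((ε - μ)/T)) (Set.Iic μ) := by
      refine Integrable.mono' hint.norm
        ((hcont.mul (continuous_fFD.comp (by continuity))).aestronglyMeasurable.restrict)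
        (Filter.Eventually.of_forall (fun ε => ?_))
      rw [Real.norm_eq_abs, abs_mul, abs_of_nonneg (fFD_nonneg _), Real.norm_eq_abs]
      exact mul_le_of_le_one_right (abs_nonneg _) (fFD_le_one _)
    have hfint2 : IntegrableOn (fun ε => h ε * fFD ((ε - μ)/T)) (Set.Ioi μ) := by
      refine Integrable.mono'
        (((exp_neg_integrableOn_Ioi μ (inv_pos.mpr hT0))).const_mul (C * Real.exp (μ/T)))
        ((hcont.mul (continuous_fFD.comp (by continuity))).aestronglyMeasurable.restrict)
        ?_
      rw [ae_restrict_iff' measurableSet_Ioi]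
      refine Filter.Eventually.of_forall (fun ε hε => ?_)
      rw [Real.norm_eq_abs, abs_mul, abs_of_nonneg (fFD_nonneg _)]
      have hbound : fFD ((ε - μ)/T) ≤ Real.exp (μ/T) * Real.exp (-(T⁻¹ * ε)) := by
        have := fFD_le_exp ((ε - μ)/T)
        rw [← Real.exp_add]
        have harg : -((ε - μ)/T) = μ/T + -(T⁻¹ * ε) := by
          field_simp
          ring
        rwa [harg] at this
      calc |h ε| * fFD ((ε - μ)/T) ≤ C * (Real.exp (μ/T) * Real.exp (-(T⁻¹ * ε))) :=
            mul_le_mul (hC ε) hbound (fFD_nonneg _) hC0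
        _ = C * Real.exp (μ/T) * Real.exp (-T⁻¹ * ε) := by rw [neg_mul]; ring
    -- splitting
    have hsplit := intervalIntegral.integral_Iic_add_Ioi hfint1 hfint2
    -- substitution on Ioi μ
    have hA : ∫ ε in Set.Ioi μ, h ε * fFD ((ε - μ)/T)
        = T * ∫ x in Set.Ioi (0:ℝ), h (μ + T*x) * fFD x := by
      have hs := integral_comp_add_mul_Ioi (fun ε => h ε * fFD ((ε - μ)/T)) hT0 μ
      have he : ∀ x : ℝ, (μ + T*x - μ)/T = x := fun x => by field_simp; ring
      simp only [he] at hs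
      rw [hs, ← mul_assoc, mul_inv_cancel₀ hTne, one_mul]
    -- substitution on Iic μ
    have hBI : (∫ ε in Set.Iic μ, h ε * fFD ((ε - μ)/T)) - (∫ ε in Set.Iic μ, h ε)
        = -(T * ∫ x in Set.Ioi (0:ℝ), h (μ - T*x) * fFD x) := by
      have hsub : (∫ ε in Set.Iic μ, h ε * fFD ((ε - μ)/T)) - (∫ ε in Set.Iic μ, h ε)
          = ∫ ε in Set.Iic μ, (h ε * fFD ((ε - μ)/T) - h ε) := (integral_sub hfint1 hint).symm
      have hpt : ∀ ε : ℝ, h ε * fFD ((ε - μ)/T) - h ε = -(h ε * fFD ((μ - ε)/T)) := by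
        intro ε
        have hneg : fFD ((μ - ε)/T) = 1 - fFD ((ε - μ)/T) := by
          rw [show (μ - ε)/T = -((ε - μ)/T) by ring]
          exact fFD_neg _
        rw [hneg]; ring
      rw [hsub]
      simp only [hpt]
      rw [integral_neg, ← setIntegral_congr_set Iio_ae_eq_Iic]
      have hs := integral_comp_sub_mul_Ioi (fun ε => h ε * fFD ((μ - ε)/T)) hT0 μ
      have he : ∀ x : ℝ, (μ - (μ - T*x))/T = x := fun x => by field_simp; ring
      simp only [he] at hs
      rw [hs, ← mul_assoc, mul_inv_cancel₀ hTne, one_mul]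
    -- combining the integrals over Ioi 0
    have hD : (∫ x in Set.Ioi (0:ℝ), h (μ + T*x) * fFD x)
        - (∫ x in Set.Ioi (0:ℝ), h (μ - T*x) * fFD x)
        = ∫ x in Set.Ioi (0:ℝ), (h (μ + T*x) - h (μ - T*x)) * fFD x := by
      rw [← integral_sub intA intB]
      refine setIntegral_congr_fun measurableSet_Ioi (fun x hx => ?_)
      beta_reduce
      ring
    have hG : (∫ x in Set.Ioi (0:ℝ), (h (μ + T*x) - h (μ - T*x)) * fFD x)
        - (2*d*T) * (∫ x in Set.Ioi (0:ℝ), x * fFD x)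
        = ∫ x in Set.Ioi (0:ℝ), ((h (μ + T*x) - h (μ - T*x)) - 2*d*T*x) * fFD x := by
      rw [← integral_const_mul,
        ← integral_sub intD (integrableOn_id_mul_fFD_Ioi.const_mul (2*d*T))]
      refine setIntegral_congr_fun measurableSet_Ioi (fun x hx => ?_)
      beta_reduce
      ring
    have hPhi : ∫ x in Set.Ioi (0:ℝ), ((h (μ + T*x) - h (μ - T*x)) - 2*d*T*x) * fFD x
        = T * ∫ x in Set.Ioi (0:ℝ), Φ T x := by
      rw [← integral_const_mul]
      refine setIntegral_congr_fun measurableSet_Ioi (fun x hx => ?_)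
      simp only [hΦdef]
      field_simp
    have hnum : (∫ ε : ℝ, h ε * fFD ((ε - μ)/T))
        - ((∫ ε in Set.Iic μ, h ε) + Real.pi^2/6 * d * T^2)
        = T^2 * ∫ x in Set.Ioi (0:ℝ), Φ T x := by
      linear_combination (-1 : ℝ)*hsplit + hA + hBI + T*hD + T*hG + T*hPhi + (2*d*T^2)*hX
    rw [hnum, mul_comm, mul_div_assoc, div_self (pow_ne_zero 2 hTne), mul_one]
  exact Filter.Tendsto.congr' hmain.symm hTend
end
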